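/- Let r = (r_1,…,r_m) be a composition of r and s = (s_1,…,s_m) a composition of s, both of length m, and let n be a positive integer. Then |SB(n,r,s)| = |SB⁻(n,r,s)| · N! / (N⁻)!, where N = (r+s+1)n + m·n(n-1)/2 + ∑_{i=1}^m r_i s_i and N⁻ = (r+s+1)n + m·n(n-1)/2. -/

import Mathlib

open MeasureTheory Finset


/-- `p = (a,b)` (1-indexed row/column) is a cell of the `(n,r,s)`-staircase: the
`(r+n) × (n+s)` rectangle with the cells below the diagonal cells removed. -/
def stairCell (n r s : ℕ) (p : ℕ × ℕ) : Prop :=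
  1 ≤ p.1 ∧ p.1 ≤ r + n ∧ 1 ≤ p.2 ∧ p.2 ≤ n + s ∧ p.1 ≤ r + p.2

/-- `p` is a diagonal cell of the `(n,r,s)`-staircase: the cell in row `r + i`, column `i`
for `1 ≤ i ≤ n`. -/
def isDiagCell (n r : ℕ) (p : ℕ × ℕ) : Prop := p.2 ≤ n ∧ p.1 = r + p.2

/-- The cells of an `(n,𝐫,𝐬)`-Selberg book: `n` common diagonal cells (`Sum.inl j` is the
`(j+1)`-st diagonal cell) and, for each page `i`, the non-diagonal cells of the
`(n, rr i, ss i)`-staircase. -/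
def NRSCell (n m : ℕ) (rr ss : Fin m → ℕ) : Type :=
  Fin n ⊕ (i : Fin m) ×
    {p : ℕ × ℕ // stairCell n (rr i) (ss i) p ∧ ¬ isDiagCell n (rr i) p}

/-- The number of cells `N = (r+s+1)n + m·n(n-1)/2 + ∑ rr i * ss i`. -/
def nrsN (n m : ℕ) (rr ss : Fin m → ℕ) : ℕ :=
  ((∑ i, rr i) + (∑ i, ss i) + 1) * n + m * (n * (n - 1) / 2) + ∑ i, rr i * ss i

/-- `f` is an `(n,𝐫,𝐬)`-Selberg book: a bijective filling with `1, …, N` such that in each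
page the entry of a non-diagonal cell is bigger than the entry of the diagonal cell in the
same row (if any) and smaller than the entry of the diagonal cell in the same column (if any). -/
def IsSBnrs (n m : ℕ) (rr ss : Fin m → ℕ) (f : NRSCell n m rr ss → ℕ) : Prop :=
  Set.BijOn f Set.univ (Set.Icc 1 (nrsN n m rr ss)) ∧
  ∀ (i : Fin m)
    (c : {p : ℕ × ℕ // stairCell n (rr i) (ss i) p ∧ ¬ isDiagCell n (rr i) p}),
    (∀ j : Fin n, c.1.1 = rr i + j.val + 1 → f (Sum.inl j) < f (Sum.inr ⟨i, c⟩)) ∧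
    (∀ j : Fin n, c.1.2 = j.val + 1 → f (Sum.inr ⟨i, c⟩) < f (Sum.inl j))

/-- `f` is an `(n,𝐫,𝐬)`-Young book: an `(n,𝐫,𝐬)`-Selberg book whose entries increase
along each row and each column of each page. -/
def IsYBnrs (n m : ℕ) (rr ss : Fin m → ℕ) (f : NRSCell n m rr ss → ℕ) : Prop :=
  IsSBnrs n m rr ss f ∧
  ∀ (i : Fin m)
    (c c' : {p : ℕ × ℕ // stairCell n (rr i) (ss i) p ∧ ¬ isDiagCell n (rr i) p}),
    ((c.1.1 = c'.1.1 ∧ c.1.2 < c'.1.2) ∨ (c.1.2 = c'.1.2 ∧ c.1.1 < c'.1.1)) →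
    f (Sum.inr ⟨i, c⟩) < f (Sum.inr ⟨i, c'⟩)

/-- `|SB(n,𝐫,𝐬)|`. -/
noncomputable def SBnrsNum (n m : ℕ) (rr ss : Fin m → ℕ) : ℕ :=
  Nat.card {f : NRSCell n m rr ss → ℕ // IsSBnrs n m rr ss f}

/-- `|YB(n,𝐫,𝐬)|`. -/
noncomputable def YBnrsNum (n m : ℕ) (rr ss : Fin m → ℕ) : ℕ :=
  Nat.card {f : NRSCell n m rr ss → ℕ // IsYBnrs n m rr ss f}

/-- The cells of an `(n,𝐫,𝐬)⁻`-Selberg book: as for `(n,𝐫,𝐬)`-Selberg books, but with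
the `rr i × ss i` rectangle at the northeast corner of page `i` removed. -/
def NRSCellM (n m : ℕ) (rr ss : Fin m → ℕ) : Type :=
  Fin n ⊕ (i : Fin m) ×
    {p : ℕ × ℕ // stairCell n (rr i) (ss i) p ∧ ¬ isDiagCell n (rr i) p ∧
      ¬ (p.1 ≤ rr i ∧ n < p.2)}

/-- The number of cells `N⁻ = (r+s+1)n + m·n(n-1)/2`. -/
def nrsNM (n m : ℕ) (rr ss : Fin m → ℕ) : ℕ :=
  ((∑ i, rr i) + (∑ i, ss i) + 1) * n + m * (n * (n - 1) / 2)

/-- `f` is an `(n,𝐫,𝐬)⁻`-Selberg book. -/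
def IsSBnrsM (n m : ℕ) (rr ss : Fin m → ℕ) (f : NRSCellM n m rr ss → ℕ) : Prop :=
  Set.BijOn f Set.univ (Set.Icc 1 (nrsNM n m rr ss)) ∧
  ∀ (i : Fin m)
    (c : {p : ℕ × ℕ // stairCell n (rr i) (ss i) p ∧ ¬ isDiagCell n (rr i) p ∧
      ¬ (p.1 ≤ rr i ∧ n < p.2)}),
    (∀ j : Fin n, c.1.1 = rr i + j.val + 1 → f (Sum.inl j) < f (Sum.inr ⟨i, c⟩)) ∧
    (∀ j : Fin n, c.1.2 = j.val + 1 → f (Sum.inr ⟨i, c⟩) < f (Sum.inl j))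

/-- `|SB⁻(n,𝐫,𝐬)|`. -/
noncomputable def SBnrsMnum (n m : ℕ) (rr ss : Fin m → ℕ) : ℕ :=
  Nat.card {f : NRSCellM n m rr ss → ℕ // IsSBnrsM n m rr ss f}


def rankIn (s : Finset ℕ) (x : ℕ) : ℕ := (s.filter (· < x)).card

lemma rankIn_lt_rankIn {s : Finset ℕ} {x y : ℕ} (hx : x ∈ s) (hxy : x < y) :
    rankIn s x < rankIn s y := by
  apply Finset.card_lt_card
  constructor
  · intro z hz
    simp only [Finset.mem_filter] at *
    exact ⟨hz.1, hz.2.trans hxy⟩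
  · intro hsub
    have := hsub (Finset.mem_filter.2 ⟨hx, hxy⟩)
    simp at this

lemma rankIn_lt_card {s : Finset ℕ} {x : ℕ} (hx : x ∈ s) : rankIn s x < s.card := by
  apply Finset.card_lt_card
  constructor
  · exact Finset.filter_subset _ _
  · intro hsub
    have := hsub hx
    simp at this

lemma rankIn_orderIsoOfFin {s : Finset ℕ} {k : ℕ} (h : s.card = k) (i : Fin k) :
    rankIn s ((s.orderIsoOfFin h i : ℕ)) = i := by
  have himg : s.filter (· < (s.orderIsoOfFin h i : ℕ)) =
      (Finset.univ.filter (fun j : Fin k => j < i)).image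
        (fun j : Fin k => ((s.orderIsoOfFin h j : ℕ))) := by
    ext z
    simp only [Finset.mem_filter, Finset.mem_image, Finset.mem_univ, true_and]
    constructor
    · rintro ⟨hz, hlt⟩
      refine ⟨(s.orderIsoOfFin h).symm ⟨z, hz⟩, ?_, by simp⟩
      · rw [← (s.orderIsoOfFin h).lt_iff_lt]
        rw [OrderIso.apply_symm_apply]; exact hlt
    · rintro ⟨j, hj, rfl⟩
      exact ⟨(s.orderIsoOfFin h j).2, by exact_mod_cast (s.orderIsoOfFin h).lt_iff_lt.2 hj⟩
  rw [rankIn, himg, Finset.card_image_of_injective _ (fun a b hab =>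
    (s.orderIsoOfFin h).injective (Subtype.ext hab))]
  have : Finset.univ.filter (fun j : Fin k => j < i) = Finset.Iio i := by
    ext j; simp
  rw [this, Fin.card_Iio]

lemma orderIsoOfFin_rankIn {s : Finset ℕ} {k : ℕ} (h : s.card = k) {x : ℕ} (hx : x ∈ s) :
    (s.orderIsoOfFin h ⟨rankIn s x, h ▸ rankIn_lt_card hx⟩ : ℕ) = x := by
  set i : Fin k := ⟨rankIn s x, h ▸ rankIn_lt_card hx⟩ with hi
  have h1 : rankIn s ((s.orderIsoOfFin h i : ℕ)) = rankIn s x := by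
    rw [rankIn_orderIsoOfFin]
  have hmem : ((s.orderIsoOfFin h i : ℕ)) ∈ s := (s.orderIsoOfFin h i).2
  rcases lt_trichotomy ((s.orderIsoOfFin h i : ℕ)) x with hlt | heq | hgt
  · exact absurd h1 (Nat.ne_of_lt (rankIn_lt_rankIn hmem hlt))
  · exact heq
  · exact absurd h1 (Nat.ne_of_gt (rankIn_lt_rankIn hx hgt))

/-- The complement in `[1,N]` of the image of an embedding. -/
def compSet {γ : Type*} [Fintype γ] [DecidableEq γ] (N : ℕ)
    (e : γ ↪ {x // x ∈ Finset.Icc 1 N}) : Finset ℕ :=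
  (Finset.Icc 1 N) \ (Finset.univ.image (fun c => ((e c : ℕ))))

/-- The increasing enumeration of `compSet N e`. -/
noncomputable def enumOf {γ : Type*} [Fintype γ] [DecidableEq γ] (N : ℕ)
    (e : γ ↪ {x // x ∈ Finset.Icc 1 N}) (k : ℕ) : ℕ :=
  if h : k < (compSet N e).card then (((compSet N e).orderIsoOfFin rfl) ⟨k, h⟩ : ℕ) else 0

section
variable {γ : Type*} [Fintype γ] [DecidableEq γ] {N : ℕ} (e : γ ↪ {x // x ∈ Finset.Icc 1 N})

lemma compSet_card (hN : Fintype.card γ ≤ N) :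
    (compSet N e).card = N - Fintype.card γ := by
  rw [compSet, Finset.card_sdiff_of_subset]
  · rw [Finset.card_image_of_injective _ (fun a b hab => e.injective (Subtype.ext hab)),
      Finset.card_univ, Nat.card_Icc]
    omega
  · intro x hx
    simp only [Finset.mem_image, Finset.mem_univ, true_and] at hx
    obtain ⟨c, rfl⟩ := hx
    exact (e c).2

lemma enumOf_mem {k : ℕ} (h : k < (compSet N e).card) : enumOf N e k ∈ compSet N e := by
  rw [enumOf, dif_pos h]
  exact (((compSet N e).orderIsoOfFin rfl) ⟨k, h⟩).2

lemma enumOf_strictMono {k l : ℕ} (hkl : k < l) (hl : l < (compSet N e).card) :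
    enumOf N e k < enumOf N e l := by
  rw [enumOf, enumOf, dif_pos (hkl.trans hl), dif_pos hl]
  exact_mod_cast ((compSet N e).orderIsoOfFin rfl).lt_iff_lt.2 (by exact hkl)

lemma rankIn_enumOf {k : ℕ} (h : k < (compSet N e).card) :
    rankIn (compSet N e) (enumOf N e k) = k := by
  rw [enumOf, dif_pos h]
  exact rankIn_orderIsoOfFin rfl ⟨k, h⟩

lemma enumOf_rankIn {x : ℕ} (hx : x ∈ compSet N e) :
    enumOf N e (rankIn (compSet N e) x) = x := by
  rw [enumOf, dif_pos (rankIn_lt_card hx)]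
  exact orderIsoOfFin_rankIn rfl hx

end

theorem abstract_count {β γ : Type*} [Fintype β] [Fintype γ] [DecidableEq β] [DecidableEq γ]
    (R : β → β → Prop) (N NB K : ℕ) (hNB : Nat.card β = NB) (hK : Nat.card γ = K)
    (hN : NB + K = N) :
    Nat.card {f : β ⊕ γ → ℕ // Set.BijOn f Set.univ (Set.Icc 1 N) ∧
        ∀ a b, R a b → f (Sum.inl a) < f (Sum.inl b)} =
    Nat.card {g : β → ℕ // Set.BijOn g Set.univ (Set.Icc 1 NB) ∧
        ∀ a b, R a b → g a < g b} * N.descFactorial K := by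
  classical
  have hKc : Fintype.card γ = K := by rw [← Nat.card_eq_fintype_card, hK]
  have hKN : Fintype.card γ ≤ N := by omega
  have hVcard : ∀ e : γ ↪ {x // x ∈ Finset.Icc 1 N}, (compSet N e).card = NB := by
    intro e; rw [compSet_card e hKN]; omega
  set Q : (β → ℕ) → Prop := fun g => Set.BijOn g Set.univ (Set.Icc 1 NB) ∧
      ∀ a b, R a b → g a < g b with hQ
  set P : (β ⊕ γ → ℕ) → Prop := fun f => Set.BijOn f Set.univ (Set.Icc 1 N) ∧
      ∀ a b, R a b → f (Sum.inl a) < f (Sum.inl b) with hP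
  -- the reconstruction map
  set Φ : ({g // Q g} × (γ ↪ {x // x ∈ Finset.Icc 1 N})) → (β ⊕ γ → ℕ) :=
    fun p => Sum.elim (fun b => enumOf N p.2 (p.1.1 b - 1)) (fun c => ((p.2 c : ℕ))) with hΦ
  -- basic facts about g's
  have hgIcc : ∀ (g : β → ℕ), Q g → ∀ b, 1 ≤ g b ∧ g b ≤ NB := by
    intro g hg b
    have := hg.1.1 (Set.mem_univ b)
    simpa using this
  have hPΦ : ∀ p, P (Φ p) := by
    rintro ⟨⟨g, hg⟩, e⟩
    have hgb : ∀ b, g b - 1 < (compSet N e).card := by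
      intro b
      have := hgIcc g hg b
      rw [hVcard e]; omega
    constructor
    · refine ⟨?_, ?_, ?_⟩
      · rintro (b | c) -
        · have := enumOf_mem e (hgb b)
          simp only [compSet, Finset.mem_sdiff, Finset.mem_Icc] at this
          simpa [Φ] using ⟨this.1.1, this.1.2⟩
        · have := (e c).2
          simp only [Finset.mem_Icc] at this
          simpa [Φ] using this
      · rintro (b | c) - (b' | c') - h
        · simp only [Φ, Sum.elim_inl] at h
          have h1 := hgIcc g hg b
          have h2 := hgIcc g hg b'
          have : g b - 1 = g b' - 1 := by
            by_contra hne
            rcases Nat.lt_or_ge (g b - 1) (g b' - 1) with hlt | hge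
            · exact absurd h (Nat.ne_of_lt (enumOf_strictMono e hlt (hgb b')))
            · have hlt : g b' - 1 < g b - 1 := by omega
              exact absurd h (Nat.ne_of_gt (enumOf_strictMono e hlt (hgb b)))
          have : g b = g b' := by omega
          have := hg.1.2.1 (Set.mem_univ b) (Set.mem_univ b') this
          rw [this]
        · exfalso
          simp only [Φ, Sum.elim_inl, Sum.elim_inr] at h
          have hmem := enumOf_mem e (hgb b)
          rw [h] at hmem
          simp only [compSet, Finset.mem_sdiff, Finset.mem_image, Finset.mem_univ,
            true_and, not_exists] at hmem
          exact hmem.2 c' rfl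
        · exfalso
          simp only [Φ, Sum.elim_inl, Sum.elim_inr] at h
          have hmem := enumOf_mem e (hgb b')
          rw [← h] at hmem
          simp only [compSet, Finset.mem_sdiff, Finset.mem_image, Finset.mem_univ,
            true_and, not_exists] at hmem
          exact hmem.2 c rfl
        · simp only [Φ, Sum.elim_inr] at h
          have := e.injective (Subtype.ext h)
          rw [this]
      · intro x hx
        have hx' : x ∈ Finset.Icc 1 N := by simpa using hx
        by_cases hc : ∃ c, ((e c : ℕ)) = x
        · obtain ⟨c, rfl⟩ := hc
          exact ⟨Sum.inr c, Set.mem_univ _, rfl⟩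
        · have hxV : x ∈ compSet N e := by
            simp only [compSet, Finset.mem_sdiff, Finset.mem_image, Finset.mem_univ,
              true_and, not_exists]
            exact ⟨hx', fun c h => hc ⟨c, h⟩⟩
          have hrank : rankIn (compSet N e) x < NB := by
            rw [← hVcard e]; exact rankIn_lt_card hxV
          obtain ⟨b, -, hb⟩ := hg.1.2.2 (show rankIn (compSet N e) x + 1 ∈ Set.Icc 1 NB by
            simp; omega)
          refine ⟨Sum.inl b, Set.mem_univ _, ?_⟩
          simp only [Φ, Sum.elim_inl, hb, Nat.add_sub_cancel]
          exact enumOf_rankIn e hxV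
    · intro a b hab
      have := hg.2 a b hab
      have h1 := hgIcc g hg a
      have h2 := hgIcc g hg b
      show enumOf N e (g a - 1) < enumOf N e (g b - 1)
      exact enumOf_strictMono e (by omega) (hgb b)
  -- injectivity
  have hinj : Function.Injective (fun p => (⟨Φ p, hPΦ p⟩ :
      {f // P f})) := by
    rintro ⟨⟨g, hg⟩, e⟩ ⟨⟨g', hg'⟩, e'⟩ h
    simp only [Subtype.mk.injEq] at h
    have hee' : e = e' := by
      ext c
      exact congrFun h (Sum.inr c)
    subst hee'
    have hgg' : g = g' := by
      funext b
      have hb := congrFun h (Sum.inl b)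
      simp only [Φ, Sum.elim_inl] at hb
      have h1 := hgIcc g hg b
      have h2 := hgIcc g' hg' b
      have hb1 : g b - 1 < (compSet N e).card := by rw [hVcard e]; omega
      have hb2 : g' b - 1 < (compSet N e).card := by rw [hVcard e]; omega
      have := rankIn_enumOf e hb1
      rw [hb, rankIn_enumOf e hb2] at this
      omega
    subst hgg'
    rfl
  -- surjectivity
  have hsurj : Function.Surjective (fun p => (⟨Φ p, hPΦ p⟩ : {f // P f})) := by
    rintro ⟨f, hf⟩
    have hfIcc : ∀ x, 1 ≤ f x ∧ f x ≤ N := by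
      intro x
      have := hf.1.1 (Set.mem_univ x)
      simpa using this
    set e : γ ↪ {x // x ∈ Finset.Icc 1 N} :=
      ⟨fun c => ⟨f (Sum.inr c), by simp [hfIcc]⟩, by
        intro c c' hcc'
        have : f (Sum.inr c) = f (Sum.inr c') := congrArg Subtype.val hcc'
        have := hf.1.2.1 (Set.mem_univ _) (Set.mem_univ _) this
        exact Sum.inr_injective this⟩ with he
    have hW : ∀ x, x ∈ compSet N e ↔ ∃ b, f (Sum.inl b) = x := by
      intro x
      simp only [compSet, Finset.mem_sdiff, Finset.mem_image, Finset.mem_univ, true_and,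
        not_exists, he, Function.Embedding.coeFn_mk]
      constructor
      · rintro ⟨hx1, hx2⟩
        obtain ⟨y, -, hy⟩ := hf.1.2.2 (show x ∈ Set.Icc 1 N by simpa using hx1)
        rcases y with b | c
        · exact ⟨b, hy⟩
        · exact absurd hy (hx2 c)
      · rintro ⟨b, rfl⟩
        refine ⟨by simp [hfIcc], fun c hc => ?_⟩
        have := hf.1.2.1 (Set.mem_univ (Sum.inr c)) (Set.mem_univ (Sum.inl b)) hc
        simp at this
    set g : β → ℕ := fun b => rankIn (compSet N e) (f (Sum.inl b)) + 1 with hgdef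
    have hgmem : ∀ b, f (Sum.inl b) ∈ compSet N e := fun b => (hW _).2 ⟨b, rfl⟩
    have hglt : ∀ b, rankIn (compSet N e) (f (Sum.inl b)) < NB := by
      intro b
      rw [← hVcard e]
      exact rankIn_lt_card (hgmem b)
    have hQg : Q g := by
      rw [hQ]
      refine ⟨⟨?_, ?_, ?_⟩, ?_⟩
      · rintro b -
        have := hglt b
        simp only [hgdef, Set.mem_Icc]
        omega
      · rintro b - b' - hbb'
        simp only [hgdef] at hbb'
        have heq : f (Sum.inl b) = f (Sum.inl b') := by
          rcases lt_trichotomy (f (Sum.inl b)) (f (Sum.inl b')) with hlt | h | hgt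
          · exact absurd hbb' (by have := rankIn_lt_rankIn (hgmem b) hlt; omega)
          · exact h
          · exact absurd hbb' (by have := rankIn_lt_rankIn (hgmem b') hgt; omega)
        have := hf.1.2.1 (Set.mem_univ _) (Set.mem_univ _) heq
        exact Sum.inl_injective this
      · intro v hv
        simp only [Set.mem_Icc] at hv
        have hv1 : v - 1 < (compSet N e).card := by rw [hVcard e]; omega
        obtain ⟨b, hb⟩ := (hW _).1 (enumOf_mem e hv1)
        refine ⟨b, Set.mem_univ _, ?_⟩
        simp only [hgdef, hb, rankIn_enumOf e hv1]
        omega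
      · intro a b hab
        have := hf.2 a b hab
        simp only [hgdef]
        have := rankIn_lt_rankIn (hgmem a) this
        omega
    refine ⟨⟨⟨g, hQg⟩, e⟩, ?_⟩
    apply Subtype.ext
    funext x
    rcases x with b | c
    · simp only [Φ, Sum.elim_inl, hgdef, Nat.add_sub_cancel]
      exact enumOf_rankIn e (hgmem b)
    · rfl
  have hcard := Nat.card_eq_of_bijective _ ⟨hinj, hsurj⟩
  rw [← hcard, Nat.card_prod]
  congr 1
  rw [Nat.card_eq_fintype_card, Fintype.card_embedding_eq, Fintype.card_coe, Nat.card_Icc,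
    hKc]
  congr 1

/-- The rectangle cells. -/
def RectCell (n m : ℕ) (rr ss : Fin m → ℕ) : Type :=
  (i : Fin m) ×
    {p : ℕ × ℕ // stairCell n (rr i) (ss i) p ∧ ¬ isDiagCell n (rr i) p ∧
      (p.1 ≤ rr i ∧ n < p.2)}

def pageMEquiv (n r s : ℕ) :
    {p : ℕ × ℕ // stairCell n r s p ∧ ¬ isDiagCell n r p ∧ ¬ (p.1 ≤ r ∧ n < p.2)} ≃
      ((Σ j : Fin n, Fin (r + j)) ⊕ (Fin s × Fin n)) where
  toFun c :=
    if h : c.1.2 ≤ n then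
      Sum.inl ⟨⟨c.1.2 - 1, by
        have hc := c.2
        simp only [stairCell, isDiagCell] at hc
        omega⟩, ⟨c.1.1 - 1, by
        have hc := c.2
        simp only [stairCell, isDiagCell] at hc
        simp only []
        omega⟩⟩
    else
      Sum.inr (⟨c.1.2 - n - 1, by
        have hc := c.2
        simp only [stairCell, isDiagCell] at hc
        omega⟩, ⟨c.1.1 - r - 1, by
        have hc := c.2
        simp only [stairCell, isDiagCell] at hc
        omega⟩)
  invFun x :=
    match x with
    | Sum.inl ⟨j, k⟩ => ⟨((k : ℕ) + 1, (j : ℕ) + 1), by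
        have hj := j.isLt
        have hk := k.isLt
        simp only [stairCell, isDiagCell]
        omega⟩
    | Sum.inr (u, v) => ⟨(r + (v : ℕ) + 1, n + (u : ℕ) + 1), by
        have hu := u.isLt
        have hv := v.isLt
        simp only [stairCell, isDiagCell]
        omega⟩
  left_inv := by
    rintro ⟨⟨a, b⟩, hc⟩
    dsimp only
    simp only [stairCell, isDiagCell] at hc
    by_cases h : b ≤ n
    · rw [dif_pos h]
      apply Subtype.ext
      simp only []
      apply Prod.ext <;> (simp only []; omega)
    · rw [dif_neg h]
      apply Subtype.ext
      simp only []
      apply Prod.ext <;> (simp only []; omega)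
  right_inv := by
    rintro (⟨j, k⟩ | ⟨u, v⟩) <;> dsimp only
    · rw [dif_pos (show (j : ℕ) + 1 ≤ n from j.isLt)]
      rfl
    · rw [dif_neg (by omega)]
      have h1 : n + (u:ℕ) + 1 - n - 1 = (u:ℕ) := by omega
      have h2 : r + (v:ℕ) + 1 - r - 1 = (v:ℕ) := by omega
      congr 1
      simp only [Prod.mk.injEq]
      exact ⟨Fin.ext h1, Fin.ext h2⟩

def pageREquiv (n r s : ℕ) :
    {p : ℕ × ℕ // stairCell n r s p ∧ ¬ isDiagCell n r p ∧ (p.1 ≤ r ∧ n < p.2)} ≃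
      (Fin r × Fin s) where
  toFun c := (⟨c.1.1 - 1, by
      have hc := c.2
      simp only [stairCell, isDiagCell] at hc
      omega⟩, ⟨c.1.2 - n - 1, by
      have hc := c.2
      simp only [stairCell, isDiagCell] at hc
      omega⟩)
  invFun x := ⟨((x.1 : ℕ) + 1, n + (x.2 : ℕ) + 1), by
      have h1 := x.1.isLt
      have h2 := x.2.isLt
      simp only [stairCell, isDiagCell]
      omega⟩
  left_inv := by
    rintro ⟨⟨a, b⟩, hc⟩
    dsimp only
    simp only [stairCell, isDiagCell] at hc
    apply Subtype.ext
    simp only [Prod.mk.injEq]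
    omega
  right_inv := by
    rintro ⟨u, v⟩
    dsimp only
    have h1 : (u:ℕ) + 1 - 1 = (u:ℕ) := by omega
    have h2 : n + (v:ℕ) + 1 - n - 1 = (v:ℕ) := by omega
    simp only [Prod.mk.injEq]
    exact ⟨Fin.ext h1, Fin.ext h2⟩

/-- Splitting the cells of a Selberg book into non-rectangle and rectangle cells. -/
def splitE (n m : ℕ) (rr ss : Fin m → ℕ) :
    NRSCell n m rr ss ≃ NRSCellM n m rr ss ⊕ RectCell n m rr ss where
  toFun x :=
    match x with
    | Sum.inl j => Sum.inl (Sum.inl j)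
    | Sum.inr ⟨i, p, hp⟩ =>
        if h : p.1 ≤ rr i ∧ n < p.2 then Sum.inr ⟨i, p, hp.1, hp.2, h⟩
        else Sum.inl (Sum.inr ⟨i, p, hp.1, hp.2, h⟩)
  invFun x :=
    match x with
    | Sum.inl (Sum.inl j) => Sum.inl j
    | Sum.inl (Sum.inr ⟨i, p, hp⟩) => Sum.inr ⟨i, p, hp.1, hp.2.1⟩
    | Sum.inr ⟨i, p, hp⟩ => Sum.inr ⟨i, p, hp.1, hp.2.1⟩
  left_inv := by
    rintro (j | ⟨i, p, hp⟩)
    · rfl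
    · dsimp only
      by_cases h : p.1 ≤ rr i ∧ n < p.2
      · rw [dif_pos h]
      · rw [dif_neg h]
  right_inv := by
    rintro ((j | ⟨i, p, hp⟩) | ⟨i, p, hp⟩) <;> dsimp only
    · rw [dif_neg hp.2.2]
    · rw [dif_pos hp.2.2]

/-- The required inequalities among non-rectangle cells. -/
def SBRel (n m : ℕ) (rr ss : Fin m → ℕ) :
    NRSCellM n m rr ss → NRSCellM n m rr ss → Prop := fun a b =>
  match a, b with
  | Sum.inl j, Sum.inr ⟨i, c⟩ => c.1.1 = rr i + j.val + 1
  | Sum.inr ⟨i, c⟩, Sum.inl j => c.1.2 = j.val + 1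
  | _, _ => False

instance pageMFintype (n r s : ℕ) :
    Fintype {p : ℕ × ℕ // stairCell n r s p ∧ ¬ isDiagCell n r p ∧ ¬ (p.1 ≤ r ∧ n < p.2)} :=
  Fintype.ofEquiv _ (pageMEquiv n r s).symm

instance pageRFintype (n r s : ℕ) :
    Fintype {p : ℕ × ℕ // stairCell n r s p ∧ ¬ isDiagCell n r p ∧ (p.1 ≤ r ∧ n < p.2)} :=
  Fintype.ofEquiv _ (pageREquiv n r s).symm

instance NRSCellM.fintype (n m : ℕ) (rr ss : Fin m → ℕ) : Fintype (NRSCellM n m rr ss) :=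
  inferInstanceAs (Fintype (Fin n ⊕ (i : Fin m) ×
    {p : ℕ × ℕ // stairCell n (rr i) (ss i) p ∧ ¬ isDiagCell n (rr i) p ∧
      ¬ (p.1 ≤ rr i ∧ n < p.2)}))

instance NRSCellM.decEq (n m : ℕ) (rr ss : Fin m → ℕ) : DecidableEq (NRSCellM n m rr ss) :=
  inferInstanceAs (DecidableEq (Fin n ⊕ (i : Fin m) ×
    {p : ℕ × ℕ // stairCell n (rr i) (ss i) p ∧ ¬ isDiagCell n (rr i) p ∧
      ¬ (p.1 ≤ rr i ∧ n < p.2)}))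

instance RectCell.fintype (n m : ℕ) (rr ss : Fin m → ℕ) : Fintype (RectCell n m rr ss) :=
  inferInstanceAs (Fintype ((i : Fin m) ×
    {p : ℕ × ℕ // stairCell n (rr i) (ss i) p ∧ ¬ isDiagCell n (rr i) p ∧
      (p.1 ≤ rr i ∧ n < p.2)}))

instance RectCell.decEq (n m : ℕ) (rr ss : Fin m → ℕ) : DecidableEq (RectCell n m rr ss) :=
  inferInstanceAs (DecidableEq ((i : Fin m) ×
    {p : ℕ × ℕ // stairCell n (rr i) (ss i) p ∧ ¬ isDiagCell n (rr i) p ∧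
      (p.1 ≤ rr i ∧ n < p.2)}))

lemma gauss_sum (n k : ℕ) : ∑ j : Fin n, (k + (j : ℕ)) = n * k + n * (n - 1) / 2 := by
  rw [Fin.sum_univ_eq_sum_range (fun j => k + j)]
  rw [Finset.sum_add_distrib, Finset.sum_const, Finset.card_range, smul_eq_mul,
    Finset.sum_range_id]

lemma card_NRSCellM (n m : ℕ) (rr ss : Fin m → ℕ) :
    Nat.card (NRSCellM n m rr ss) =
      ((∑ i, rr i) + (∑ i, ss i) + 1) * n + m * (n * (n - 1) / 2) := by
  have e : NRSCellM n m rr ss ≃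
      Fin n ⊕ (i : Fin m) × ((Σ j : Fin n, Fin (rr i + j)) ⊕ (Fin (ss i) × Fin n)) :=
    Equiv.sumCongr (Equiv.refl _) (Equiv.sigmaCongrRight fun i => pageMEquiv n (rr i) (ss i))
  rw [Nat.card_congr e, Nat.card_eq_fintype_card]
  simp only [Fintype.card_sum, Fintype.card_sigma, Fintype.card_fin, Fintype.card_prod]
  have : ∀ i : Fin m, (∑ j : Fin n, (rr i + (j:ℕ))) + ss i * n =
      n * rr i + n * (n-1)/2 + ss i * n := by
    intro i; rw [gauss_sum]
  rw [Finset.sum_congr rfl (fun i _ => this i)]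
  rw [Finset.sum_add_distrib, Finset.sum_add_distrib, Finset.sum_const, Finset.card_univ,
    Fintype.card_fin, ← Finset.mul_sum, ← Finset.sum_mul, smul_eq_mul]
  ring

lemma card_RectCell (n m : ℕ) (rr ss : Fin m → ℕ) :
    Nat.card (RectCell n m rr ss) = ∑ i, rr i * ss i := by
  have e : RectCell n m rr ss ≃ (i : Fin m) × (Fin (rr i) × Fin (ss i)) :=
    Equiv.sigmaCongrRight fun i => pageREquiv n (rr i) (ss i)
  rw [Nat.card_congr e, Nat.card_eq_fintype_card]
  simp only [Fintype.card_sigma, Fintype.card_prod, Fintype.card_fin]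


lemma bijOn_comp_equiv {α β : Type*} (e : α ≃ β) (f : β → ℕ) (S : Set ℕ) :
    Set.BijOn (fun x => f (e x)) Set.univ S ↔ Set.BijOn f Set.univ S := by
  constructor
  · intro h
    have h2 : Set.BijOn (⇑e.symm) Set.univ Set.univ :=
      Set.bijOn_univ.2 e.symm.bijective
    have h3 := h.comp h2
    have h4 : ((fun x => f (e x)) ∘ ⇑e.symm) = f := by
      funext x; simp
    rwa [h4] at h3
  · intro h
    exact h.comp (Set.bijOn_univ.2 e.bijective)

lemma isSB_iff (n m : ℕ) (rr ss : Fin m → ℕ) (f : NRSCell n m rr ss → ℕ) :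
    IsSBnrs n m rr ss f ↔
      (Set.BijOn (fun x => f ((splitE n m rr ss).symm x)) Set.univ
          (Set.Icc 1 (nrsN n m rr ss)) ∧
        ∀ a b, SBRel n m rr ss a b →
          (fun x => f ((splitE n m rr ss).symm x)) (Sum.inl a) <
            (fun x => f ((splitE n m rr ss).symm x)) (Sum.inl b)) := by
  constructor
  · rintro ⟨hbij, hcon⟩
    refine ⟨(bijOn_comp_equiv (splitE n m rr ss).symm f _).2 hbij, ?_⟩
    rintro (j | ⟨i, c, hc⟩) (j' | ⟨i', c', hc'⟩) hR
    · exact absurd hR (by simp [SBRel])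
    · exact (hcon i' ⟨c', hc'.1, hc'.2.1⟩).1 j hR
    · exact (hcon i ⟨c, hc.1, hc.2.1⟩).2 j' hR
    · exact absurd hR (by simp [SBRel])
  · rintro ⟨hbij, hcon⟩
    refine ⟨(bijOn_comp_equiv (splitE n m rr ss).symm f _).1 hbij, ?_⟩
    rintro i ⟨c, hc1, hc2⟩
    constructor
    · intro j hj
      simp only at hj
      by_cases h : c.1 ≤ rr i ∧ n < c.2
      · exfalso; omega
      · exact hcon (Sum.inl j) (Sum.inr ⟨i, c, hc1, hc2, h⟩) hj
    · intro j hj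
      simp only at hj
      by_cases h : c.1 ≤ rr i ∧ n < c.2
      · exfalso; have := j.isLt; omega
      · exact hcon (Sum.inr ⟨i, c, hc1, hc2, h⟩) (Sum.inl j) hj

lemma isSBM_iff (n m : ℕ) (rr ss : Fin m → ℕ) (g : NRSCellM n m rr ss → ℕ) :
    IsSBnrsM n m rr ss g ↔
      (Set.BijOn g Set.univ (Set.Icc 1 (nrsNM n m rr ss)) ∧
        ∀ a b, SBRel n m rr ss a b → g a < g b) := by
  constructor
  · rintro ⟨hbij, hcon⟩
    refine ⟨hbij, ?_⟩
    rintro (j | ⟨i, c, hc⟩) (j' | ⟨i', c', hc'⟩) hR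
    · exact absurd hR (by simp [SBRel])
    · exact (hcon i' ⟨c', hc'⟩).1 j hR
    · exact (hcon i ⟨c, hc⟩).2 j' hR
    · exact absurd hR (by simp [SBRel])
  · rintro ⟨hbij, hcon⟩
    refine ⟨hbij, ?_⟩
    rintro i ⟨c, hc⟩
    exact ⟨fun j hj => hcon (Sum.inl j) (Sum.inr ⟨i, c, hc⟩) hj,
      fun j hj => hcon (Sum.inr ⟨i, c, hc⟩) (Sum.inl j) hj⟩


theorem selberg_books_eq_minus_mul_ratio (n m r s : ℕ) (hn : 0 < n)
    (rr ss : Fin m → ℕ) (hr : ∑ i, rr i = r) (hs : ∑ i, ss i = s) :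
    (SBnrsNum n m rr ss : ℚ) =
      SBnrsMnum n m rr ss *
        (((r + s + 1) * n + m * (n * (n - 1) / 2) + ∑ i, rr i * ss i).factorial : ℚ) /
        (((r + s + 1) * n + m * (n * (n - 1) / 2)).factorial : ℚ) := by
  subst hr
  subst hs
  classical
  have hNsum : nrsN n m rr ss = nrsNM n m rr ss + ∑ i, rr i * ss i := rfl
  have hNB : Nat.card (NRSCellM n m rr ss) = nrsNM n m rr ss := card_NRSCellM n m rr ss
  have habs := abstract_count (SBRel n m rr ss) (nrsN n m rr ss) (nrsNM n m rr ss)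
      (∑ i, rr i * ss i) hNB (card_RectCell n m rr ss) hNsum.symm
  have h1 : SBnrsNum n m rr ss = Nat.card
      {F : NRSCellM n m rr ss ⊕ RectCell n m rr ss → ℕ //
        Set.BijOn F Set.univ (Set.Icc 1 (nrsN n m rr ss)) ∧
        ∀ a b, SBRel n m rr ss a b → F (Sum.inl a) < F (Sum.inl b)} := by
    rw [SBnrsNum]
    exact Nat.card_congr (Equiv.subtypeEquiv
      (Equiv.arrowCongr (splitE n m rr ss) (Equiv.refl ℕ)) (fun f => isSB_iff n m rr ss f))
  have h2 : SBnrsMnum n m rr ss = Nat.card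
      {g : NRSCellM n m rr ss → ℕ //
        Set.BijOn g Set.univ (Set.Icc 1 (nrsNM n m rr ss)) ∧
        ∀ a b, SBRel n m rr ss a b → g a < g b} := by
    rw [SBnrsMnum]
    exact Nat.card_congr (Equiv.subtypeEquiv (Equiv.refl _)
      (fun g => by simpa using isSBM_iff n m rr ss g))
  have key : SBnrsNum n m rr ss =
      SBnrsMnum n m rr ss * (nrsN n m rr ss).descFactorial (∑ i, rr i * ss i) := by
    rw [h1, habs, ← h2]
  have hKle : (∑ i, rr i * ss i) ≤ nrsN n m rr ss := by
    rw [hNsum]; exact Nat.le_add_left _ _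
  have hsub : nrsN n m rr ss - (∑ i, rr i * ss i) = nrsNM n m rr ss := by
    rw [hNsum, Nat.add_sub_cancel]
  have hfac : (nrsNM n m rr ss).factorial *
      (nrsN n m rr ss).descFactorial (∑ i, rr i * ss i) = (nrsN n m rr ss).factorial := by
    have h := Nat.factorial_mul_descFactorial hKle
    rwa [hsub] at h
  show (SBnrsNum n m rr ss : ℚ) = SBnrsMnum n m rr ss *
      ((nrsN n m rr ss).factorial : ℚ) / ((nrsNM n m rr ss).factorial : ℚ)
  rw [key, eq_div_iff (by exact_mod_cast (nrsNM n m rr ss).factorial_ne_zero)]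
  push_cast
  rw [← hfac]
  push_cast
  ring
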